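/- Let L be a complemented modular lattice of rank n with frame ⟨a₁,…,aₙ⟩, and define φ(p) := ⋁{aᵢ : p ∧ (a₁∨⋯∨aᵢ) covers p ∧ (a₁∨⋯∨a_{i−1})}. Then φ is rank-preserving: r(φ(p)) = r(p) for all p ∈ L. -/

import Mathlib

open Order

section ModularHeightLemmas

variable {L : Type*} [Lattice L] [IsModularLattice L]

/-- If `a ⋖ b` and `y < b` with `y ≰ a`, then `y ⊓ a < a` and `y ⊓ a ⋖ y`. -/
private lemma aux_inf_lt_covBy {a b y : L} (hab : a ⋖ b) (hy : y < b) (hya : ¬ y ≤ a) :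
    y ⊓ a < a ∧ y ⊓ a ⋖ y := by
  have hsup : a ⊔ y = b := by
    rcases hab.wcovBy.eq_or_eq le_sup_left (sup_le hab.lt.le hy.le) with h | h
    · exact absurd (le_sup_right.trans h.le) hya
    · exact h
  constructor
  · refine lt_of_le_of_ne inf_le_right fun h => ?_
    have hay : a ≤ y := h.symm.le.trans inf_le_left
    exact hy.ne (by rw [← hsup, sup_eq_right.mpr hay])
  · have h1 : a ⋖ a ⊔ y := by rw [hsup]; exact hab
    have h2 := inf_covBy_of_covBy_sup_left h1
    rwa [inf_comm] at h2

private lemma height_covBy_le_aux :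
    ∀ (m : ℕ) (a b : L), a ⋖ b → Order.height a ≤ m → Order.height b ≤ m + 1 := by
  intro m
  induction m with
  | zero =>
    intro a b hab ha
    rw [Order.height_eq_iSup_lt_height]
    refine iSup₂_le fun y hy => ?_
    have hy0 : Order.height y ≤ (0 : ℕ) := by
      by_cases hya : y ≤ a
      · exact (Order.height_mono hya).trans ha
      · obtain ⟨hlt, -⟩ := aux_inf_lt_covBy hab hy hya
        have hmin : IsMin a := Order.height_eq_zero.mp (le_antisymm (by simpa using ha) (zero_le))
        exact absurd hlt hmin.not_lt
    exact add_le_add_left hy0 1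
  | succ m ih =>
    intro a b hab ha
    rw [Order.height_eq_iSup_lt_height]
    refine iSup₂_le fun y hy => ?_
    have hym : Order.height y ≤ ((m + 1 : ℕ) : ℕ∞) := by
      by_cases hya : y ≤ a
      · exact (Order.height_mono hya).trans ha
      · obtain ⟨hlt, hcov⟩ := aux_inf_lt_covBy hab hy hya
        have hfin : Order.height (y ⊓ a) < ⊤ :=
          lt_of_le_of_lt ((Order.height_mono inf_le_right).trans ha) (WithTop.coe_lt_top _)
        have h1 : Order.height (y ⊓ a) < Order.height a := Order.height_strictMono hlt hfin
        have h2 : Order.height (y ⊓ a) ≤ (m : ℕ∞) := by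
          have h3 : Order.height (y ⊓ a) < (m : ℕ∞) + 1 := by
            refine lt_of_lt_of_le h1 (ha.trans ?_)
            push_cast
            exact le_rfl
          exact (ENat.lt_add_one_iff (by simp)).mp h3
        exact ih _ _ hcov h2
    exact add_le_add_left hym 1

/-- In a modular lattice, a covering step increases height by at most one. -/
private lemma height_covBy_le {a b : L} (hab : a ⋖ b) :
    Order.height b ≤ Order.height a + 1 := by
  rcases eq_or_ne (Order.height a) ⊤ with h | h
  · simp [h]
  · obtain ⟨m, hm⟩ := WithTop.ne_top_iff_exists.mp h
    rw [← hm]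
    exact height_covBy_le_aux m a b hab (le_of_eq hm.symm)

/-- In a modular lattice, joining an atom increases height by at most one. -/
private lemma height_sup_atom [OrderBot L] {c : L} (hc : IsAtom c) (x : L) :
    Order.height (x ⊔ c) ≤ Order.height x + 1 := by
  by_cases hcx : c ≤ x
  · rw [sup_eq_left.2 hcx]; exact le_self_add
  · have h1 : c ⊓ x = ⊥ := by
      refine hc.2 _ (lt_of_le_of_ne inf_le_left fun h => hcx ?_)
      exact h.symm.le.trans inf_le_right
    have h2 : c ⊓ x ⋖ c := by rw [h1]; exact hc.bot_covBy
    have h3 : x ⋖ c ⊔ x := covBy_sup_of_inf_covBy_left h2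
    rw [sup_comm] at h3
    exact height_covBy_le h3

private lemma height_sup_finset [OrderBot L] {ι : Type*} (a : ι → L) (ha : ∀ i, IsAtom (a i)) :
    ∀ (F : Finset ι) (x : L), Order.height (x ⊔ F.sup a) ≤ Order.height x + F.card := by
  classical
  intro F
  induction F using Finset.induction_on with
  | empty => intro x; simp
  | insert j F hj ih =>
    intro x
    rw [Finset.sup_insert, ← sup_assoc]
    calc Order.height ((x ⊔ a j) ⊔ F.sup a) ≤ Order.height (x ⊔ a j) + F.card := ih _
      _ ≤ (Order.height x + 1) + F.card := add_le_add_left (height_sup_atom (ha j) x) _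
      _ = Order.height x + (insert j F).card := by
          rw [Finset.card_insert_of_notMem hj]
          push_cast
          ring

/-- In a modular lattice, meeting a covering pair with `x` gives equal or covering. -/
private lemma inf_covBy_or_eq {u v : L} (huv : u ⋖ v) (x : L) :
    x ⊓ u = x ⊓ v ∨ (x ⊓ u) ⋖ (x ⊓ v) := by
  rcases huv.wcovBy.eq_or_eq (le_sup_right : u ≤ (x ⊓ v) ⊔ u)
      (sup_le inf_le_right huv.lt.le) with h | h
  · left
    refine le_antisymm (inf_le_inf_left x huv.lt.le) (le_inf inf_le_left ?_)
    exact (le_sup_left : x ⊓ v ≤ (x ⊓ v) ⊔ u).trans h.le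
  · right
    have h1 : u ⋖ u ⊔ (x ⊓ v) := by rw [sup_comm, h]; exact huv
    have h2 := inf_covBy_of_covBy_sup_left h1
    have h3 : u ⊓ (x ⊓ v) = x ⊓ u := by
      rw [inf_left_comm, inf_eq_left.2 huv.lt.le, inf_comm]
    rwa [h3] at h2

end ModularHeightLemmas

open scoped Classical in
/-- The canonical retraction onto the frame generated by atoms `a₁, …, aₙ`:
`φ(p) = ⋁ {aᵢ : p ⊓ (a₁ ∨ ⋯ ∨ aᵢ) covers p ⊓ (a₁ ∨ ⋯ ∨ a_{i−1})}`. -/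
noncomputable def frameRetract {L : Type*} [Lattice L] [BoundedOrder L] {n : ℕ}
    (a : Fin n → L) (p : L) : L :=
  (Finset.univ.filter fun i : Fin n =>
    (p ⊓ (Finset.Iio i).sup a) ⋖ (p ⊓ (Finset.Iic i).sup a)).sup a

/-- Let `L` be a complemented modular lattice of rank `n` with a frame generated by a
base of atoms `a₁, …, aₙ`. The canonical retraction `φ` is rank-preserving, where the
rank of `p` is the maximum length of a chain from `⊥` to `p` (the order-theoretic
height of `p`). -/
theorem frameRetract_rank_preserving {L : Type*} [Lattice L] [BoundedOrder L]
    [IsModularLattice L] [ComplementedLattice L] {n : ℕ}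
    (hrank : Order.height (⊤ : L) = n)
    (a : Fin n → L) (hatom : ∀ i, IsAtom (a i))
    (hbase : Finset.univ.sup a = ⊤)
    (p : L) :
    Order.height (frameRetract a p) = Order.height p := by
  classical
  have hfin : ∀ x : L, Order.height x ≤ (n : ℕ∞) := fun x => hrank ▸ Order.height_mono le_top
  -- partial joins
  set B : ℕ → L := fun k => (Finset.univ.filter fun i : Fin n => (i : ℕ) < k).sup a with hB
  have hB0 : B 0 = ⊥ := by simp [hB]
  have hBsucc : ∀ (k : ℕ) (hk : k < n), B (k + 1) = B k ⊔ a ⟨k, hk⟩ := by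
    intro k hk
    have hins : (Finset.univ.filter fun i : Fin n => (i : ℕ) < k + 1)
        = insert (⟨k, hk⟩ : Fin n) (Finset.univ.filter fun i : Fin n => (i : ℕ) < k) := by
      ext i
      simp only [Finset.mem_filter, Finset.mem_univ, true_and, Finset.mem_insert]
      constructor
      · intro h
        rcases Nat.lt_succ_iff_lt_or_eq.1 h with h | h
        · exact Or.inr h
        · exact Or.inl (Fin.ext h)
      · rintro (h | h)
        · subst h; exact Nat.lt_succ_self k
        · exact Nat.lt_succ_of_lt h
    rw [hB]
    dsimp only
    rw [hins, Finset.sup_insert, sup_comm]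
  have hBtop : B n = ⊤ := by
    have huniv : (Finset.univ.filter fun i : Fin n => (i : ℕ) < n) = Finset.univ := by
      ext i; simp [i.isLt]
    rw [hB]; dsimp only; rw [huniv, hbase]
  have hIio : ∀ i : Fin n, (Finset.Iio i).sup a = B (i : ℕ) := by
    intro i
    congr 1
    ext j
    simp only [Finset.mem_Iio, Finset.mem_filter, Finset.mem_univ, true_and, Fin.lt_def]
  have hIic : ∀ i : Fin n, (Finset.Iic i).sup a = B ((i : ℕ) + 1) := by
    intro i
    congr 1
    ext j
    simp only [Finset.mem_Iic, Finset.mem_filter, Finset.mem_univ, true_and, Fin.le_def,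
      Nat.lt_succ_iff]
  -- cover-or-equal steps
  have hstep : ∀ k : ℕ, k < n → (p ⊓ B k = p ⊓ B (k + 1)) ∨ (p ⊓ B k ⋖ p ⊓ B (k + 1)) := by
    intro k hk
    rw [hBsucc k hk]
    by_cases hak : a ⟨k, hk⟩ ≤ B k
    · left; rw [sup_eq_left.2 hak]
    · have h1 : a ⟨k, hk⟩ ⊓ B k = ⊥ := by
        refine (hatom _).2 _ (lt_of_le_of_ne inf_le_left fun h => hak ?_)
        exact h.symm.le.trans inf_le_right
      have h2 : a ⟨k, hk⟩ ⊓ B k ⋖ a ⟨k, hk⟩ := by rw [h1]; exact (hatom _).bot_covBy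
      have h3 : B k ⋖ a ⟨k, hk⟩ ⊔ B k := covBy_sup_of_inf_covBy_left h2
      rw [sup_comm] at h3
      exact inf_covBy_or_eq h3 p
  -- the index set
  set T : Finset (Fin n) := Finset.univ.filter (fun i : Fin n =>
      (p ⊓ (Finset.Iio i).sup a) ⋖ (p ⊓ (Finset.Iic i).sup a)) with hT
  have hmemT : ∀ i : Fin n, i ∈ T ↔ (p ⊓ B (i : ℕ) ⋖ p ⊓ B ((i : ℕ) + 1)) := by
    intro i
    rw [hT, Finset.mem_filter, hIio i, hIic i]
    simp
  -- height of p ⊓ B k counts covers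
  have key : ∀ k : ℕ, k ≤ n →
      Order.height (p ⊓ B k) = ((T.filter fun i : Fin n => (i : ℕ) < k).card : ℕ∞) := by
    intro k
    induction k with
    | zero =>
      intro _
      have : (T.filter fun i : Fin n => (i : ℕ) < 0) = ∅ := by
        ext i; simp
      rw [hB0, inf_bot_eq, this]
      simp
    | succ k ih =>
      intro hk1
      have hk : k < n := hk1
      have ihk := ih hk.le
      rcases hstep k hk with heq | hcov
      · have hT' : (T.filter fun i : Fin n => (i : ℕ) < k + 1)
            = T.filter fun i : Fin n => (i : ℕ) < k := by
          ext i
          simp only [Finset.mem_filter]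
          constructor
          · rintro ⟨hi, hlt⟩
            refine ⟨hi, ?_⟩
            rcases Nat.lt_succ_iff_lt_or_eq.1 hlt with h | h
            · exact h
            · exfalso
              have hik : i = (⟨k, hk⟩ : Fin n) := Fin.ext h
              rw [hik, hmemT] at hi
              exact hi.lt.ne heq
          · rintro ⟨hi, hlt⟩
            exact ⟨hi, Nat.lt_succ_of_lt hlt⟩
        rw [← heq, hT', ihk]
      · have hio : (⟨k, hk⟩ : Fin n) ∈ T := (hmemT _).2 hcov
        have hT' : (T.filter fun i : Fin n => (i : ℕ) < k + 1)
            = insert (⟨k, hk⟩ : Fin n) (T.filter fun i : Fin n => (i : ℕ) < k) := by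
          ext i
          simp only [Finset.mem_filter, Finset.mem_insert]
          constructor
          · rintro ⟨hi, hlt⟩
            rcases Nat.lt_succ_iff_lt_or_eq.1 hlt with h | h
            · exact Or.inr ⟨hi, h⟩
            · exact Or.inl (Fin.ext h)
          · rintro (h | ⟨hi, hlt⟩)
            · subst h; exact ⟨hio, Nat.lt_succ_self k⟩
            · exact ⟨hi, Nat.lt_succ_of_lt hlt⟩
        have hnotmem : (⟨k, hk⟩ : Fin n) ∉ T.filter fun i : Fin n => (i : ℕ) < k := by
          simp [Finset.mem_filter]
        have hne : Order.height (p ⊓ B k) ≠ ⊤ :=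
          ne_top_of_le_ne_top (WithTop.coe_ne_top) (hfin _)
        have hle : Order.height (p ⊓ B (k + 1)) ≤ Order.height (p ⊓ B k) + 1 :=
          height_covBy_le hcov
        have hge : Order.height (p ⊓ B k) + 1 ≤ Order.height (p ⊓ B (k + 1)) := by
          refine (ENat.add_one_le_iff hne).2 ?_
          exact Order.height_strictMono hcov.lt (lt_of_le_of_lt (hfin _) (WithTop.coe_lt_top _))
        rw [hT', Finset.card_insert_of_notMem hnotmem, le_antisymm hle hge, ihk]
        push_cast
        ring
  -- height of p
  have hp : Order.height p = (T.card : ℕ∞) := by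
    have h1 := key n le_rfl
    rw [hBtop, inf_top_eq] at h1
    rw [h1]
    congr 2
    apply Finset.filter_true_of_mem
    intro i _
    exact i.isLt
  -- height of sups of atoms
  have hsup_le := height_sup_finset a hatom
  have hsupT : ∀ F : Finset (Fin n), Order.height (F.sup a) = (F.card : ℕ∞) := by
    intro F
    have h1 : Order.height (F.sup a) ≤ (F.card : ℕ∞) := by
      have := hsup_le F ⊥
      simpa using this
    refine le_antisymm h1 ?_
    have hunion : (F ∪ Fᶜ).sup a = ⊤ := by rw [Finset.union_compl, hbase]
    have h2 := hsup_le Fᶜ (F.sup a)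
    rw [← Finset.sup_union, hunion, hrank] at h2
    have hne : Order.height (F.sup a) ≠ ⊤ := ne_top_of_le_ne_top (WithTop.coe_ne_top) h1
    set m : ℕ := (Order.height (F.sup a)).toNat with hmdef
    have hm : ((m : ℕ) : ℕ∞) = Order.height (F.sup a) := ENat.coe_toNat hne
    rw [← hm] at h2 h1 ⊢
    have hcompl : (Fᶜ : Finset (Fin n)).card = n - F.card := by
      simp [Finset.card_compl]
    rw [hcompl] at h2
    have h2' : n ≤ m + (n - F.card) := by exact_mod_cast h2
    have h1' : m ≤ F.card := by exact_mod_cast h1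
    have hFn : F.card ≤ n := by simpa using Finset.card_le_univ F
    exact_mod_cast (by omega : F.card ≤ m)
  -- conclude
  have hfr : frameRetract a p = T.sup a := by
    rw [frameRetract, hT]
  rw [hfr, hsupT, hp]
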